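/- For n even, the dimension of DP_n = conv{M_σ : σ ∈ D_n} ⊆ ℝ^{n×n} is 2n − 3. -/

import Mathlib

open Matrix Finset

variable (n : ℕ) [NeZero n]

/-- Permutation matrix of `σ`: entries `δ_{i, σ(j)}`. -/
def permMat (σ : Equiv.Perm (ZMod n)) : Matrix (ZMod n) (ZMod n) ℝ :=
  Matrix.of fun i j => if i = σ j then 1 else 0

/-- Rotation `x ↦ x + 1` of the regular n-gon with vertex set `ZMod n`. -/
def rot : Equiv.Perm (ZMod n) := Equiv.addRight 1

/-- Reflection `x ↦ -x` of the regular n-gon. -/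
def rfl' : Equiv.Perm (ZMod n) := Equiv.neg (ZMod n)

/-- The dihedral group `D_n ≤ S_n`, symmetries of the regular n-gon. -/
def dihedral : Subgroup (Equiv.Perm (ZMod n)) := Subgroup.closure {rot n, rfl' n}

/-- Adjacency matrix of the n-cycle `C_n`. -/
def cycAdj : Matrix (ZMod n) (ZMod n) ℝ :=
  Matrix.of fun i j => if j = i + 1 ∨ j = i - 1 then 1 else 0

/-- The permutation polytope `DP_n = conv{M_σ : σ ∈ D_n} ⊆ ℝ^{n×n}`. -/
def DP : Set (Matrix (ZMod n) (ZMod n) ℝ) :=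
  convexHull ℝ {M | ∃ σ ∈ dihedral n, M = permMat n σ}

/-- The cyclic shift matrix `R`. -/
def Rmat : Matrix (ZMod n) (ZMod n) ℝ := Matrix.of fun i j => if j = i + 1 then 1 else 0

/-- The `2n` rows of `W = [[I,...,I],[I,R,...,R^{n-1}]]`, viewed as vectors in
`ℝ^{n²} = Matrix (ZMod n) (ZMod n) ℝ`; the first matrix coordinate is the block index. -/
def Wrow : Bool × ZMod n → Matrix (ZMod n) (ZMod n) ℝ
  | (false, k) => Matrix.of fun _ j => if j = k then 1 else 0
  | (true, k) => Matrix.of fun b j => (Rmat n ^ b.val) k j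

/-- The polytope `Q_n ⊆ ℝ^{n²}`. -/
def Qpoly : Set (Matrix (ZMod n) (ZMod n) ℝ) := convexHull ℝ (Set.range (Wrow n))

/-- A point of `ℝ^{n²}` is a lattice point if all its coordinates are integers. -/
def IsInt (x : Matrix (ZMod n) (ZMod n) ℝ) : Prop := ∀ b j, ∃ z : ℤ, x b j = (z : ℝ)

set_option linter.unusedSectionVars false
set_option maxHeartbeats 1600000

namespace DPaux

def Dsub : Subgroup (Equiv.Perm (ZMod n)) where
  carrier := {σ | (∃ k, ∀ x, σ x = x + k) ∨ (∃ k, ∀ x, σ x = k - x)}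
  one_mem' := Or.inl ⟨0, fun x => (add_zero x).symm⟩
  mul_mem' := by
    rintro σ τ (⟨k, hk⟩ | ⟨k, hk⟩) (⟨l, hl⟩ | ⟨l, hl⟩) <;>
      simp only [Set.mem_setOf_eq, Equiv.Perm.mul_apply]
    · exact Or.inl ⟨l + k, fun x => by rw [hl, hk]; ring⟩
    · exact Or.inr ⟨l + k, fun x => by rw [hl, hk]; ring⟩
    · exact Or.inr ⟨k - l, fun x => by rw [hl, hk]; ring⟩
    · exact Or.inl ⟨k - l, fun x => by rw [hl, hk]; ring⟩
  inv_mem' := by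
    rintro σ (⟨k, hk⟩ | ⟨k, hk⟩)
    · refine Or.inl ⟨-k, fun x => ?_⟩
      rw [Equiv.Perm.inv_eq_iff_eq]
      rw [hk]; ring
    · refine Or.inr ⟨k, fun x => ?_⟩
      rw [Equiv.Perm.inv_eq_iff_eq, hk]; ring

lemma rot_pow_apply (m : ℕ) (x : ZMod n) : ((rot n) ^ m) x = x + m := by
  induction m with
  | zero => simp
  | succ m ih =>
    rw [pow_succ', Equiv.Perm.mul_apply, ih]
    show x + ↑m + 1 = x + ↑(m + 1)
    push_cast; ring

lemma dihedral_eq : dihedral n = Dsub n := by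
  apply le_antisymm
  · rw [dihedral, Subgroup.closure_le]
    rintro σ (rfl | rfl)
    · exact Or.inl ⟨1, fun x => rfl⟩
    · exact Or.inr ⟨0, fun x => by show -x = 0 - x; ring⟩
  · rintro σ (⟨k, hk⟩ | ⟨k, hk⟩)
    · have : σ = (rot n) ^ k.val := by
        ext x
        rw [rot_pow_apply, hk, ZMod.natCast_val, ZMod.cast_id]
      rw [this]
      exact pow_mem (Subgroup.subset_closure (by simp)) _
    · have : σ = (rot n) ^ k.val * rfl' n := by
        ext x
        rw [Equiv.Perm.mul_apply, rot_pow_apply, hk]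
        show k - x = -x + k.val
        rw [ZMod.natCast_val, ZMod.cast_id]; ring
      rw [this]
      exact mul_mem (pow_mem (Subgroup.subset_closure (by simp)) _)
        (Subgroup.subset_closure (by simp))


def P : Bool × ZMod n → Matrix (ZMod n) (ZMod n) ℝ
  | (false, k) => Matrix.of fun i j => if i = j + k then 1 else 0
  | (true, k) => Matrix.of fun i j => if i = k - j then 1 else 0

lemma vertex_set : {M | ∃ σ ∈ dihedral n, M = permMat n σ} = Set.range (P n) := by
  ext M
  constructor
  · rintro ⟨σ, hσ, rfl⟩
    rw [dihedral_eq] at hσ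
    rcases hσ with ⟨k, hk⟩ | ⟨k, hk⟩
    · exact ⟨(false, k), by ext i j; simp [P, permMat, hk]⟩
    · exact ⟨(true, k), by ext i j; simp [P, permMat, hk]⟩
  · rintro ⟨⟨t, k⟩, rfl⟩
    cases t
    · refine ⟨Equiv.addRight k, ?_, by ext i j; simp [P, permMat]; congr⟩
      rw [dihedral_eq]; exact Or.inl ⟨k, fun x => rfl⟩
    · refine ⟨(Equiv.neg (ZMod n)).trans (Equiv.addLeft k), ?_, ?_⟩
      · rw [dihedral_eq]; exact Or.inr ⟨k, fun x => by simp [sub_eq_add_neg, add_comm]⟩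
      · ext i j; simp [P, permMat, sub_eq_add_neg, add_comm]

def D : Bool × ZMod n → Matrix (ZMod n) (ZMod n) ℝ :=
  fun x => P n x - P n (false, 0)

noncomputable def ψ : (Bool × ZMod n → ℝ) →ₗ[ℝ] Matrix (ZMod n) (ZMod n) ℝ :=
  Fintype.linearCombination ℝ (D n)

lemma psi_apply (c : Bool × ZMod n → ℝ) (i j : ZMod n) :
    ψ n c i j = c (false, i - j) + c (true, i + j) - (∑ x, c x) * (if i = j then 1 else 0) := by
  have hD : ∀ x, D n x i j = P n x i j - (if i = j then 1 else 0) := by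
    intro x
    have : P n (false, (0 : ZMod n)) i j = if i = j then 1 else 0 := by simp [P]
    rw [D, Matrix.sub_apply, this]
  have h1 : ψ n c i j = ∑ x, c x * (P n x i j - (if i = j then 1 else 0)) := by
    rw [ψ, Fintype.linearCombination_apply, Matrix.sum_apply]
    exact Finset.sum_congr rfl fun x _ => by
      rw [Matrix.smul_apply, smul_eq_mul, hD]
  rw [h1]
  have h2 : (∑ x, c x * (P n x i j - (if i = j then 1 else 0)))
      = (∑ x, c x * P n x i j) - (∑ x, c x) * (if i = j then 1 else 0) := by
    rw [Finset.sum_mul, ← Finset.sum_sub_distrib]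
    exact Finset.sum_congr rfl fun x _ => by ring
  rw [h2]
  congr 1
  rw [Fintype.sum_prod_type, Fintype.sum_bool]
  have e1 : ∀ k : ZMod n, c (true, k) * P n (true, k) i j
      = if k = i + j then c (true, k) else 0 := by
    intro k
    have : (i = k - j) ↔ (k = i + j) := by
      constructor <;> intro h <;> subst h <;> ring
    simp only [P, Matrix.of_apply, this, mul_ite, mul_one, mul_zero]
  have e2 : ∀ k : ZMod n, c (false, k) * P n (false, k) i j
      = if k = i - j then c (false, k) else 0 := by
    intro k
    have : (i = j + k) ↔ (k = i - j) := by
      constructor <;> intro h <;> subst h <;> ring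
    simp only [P, Matrix.of_apply, this, mul_ite, mul_one, mul_zero]
  simp only [e1, e2, Finset.sum_ite_eq', Finset.mem_univ, if_true]
  ring

end DPaux

namespace DPaux
variable (n : ℕ) [NeZero n]

def pr (hd : 2 ∣ n) : ZMod n →+* ZMod 2 := ZMod.castHom hd (ZMod 2)

lemma exists_half (hd : 2 ∣ n) (e : ZMod n) (h : pr n hd e = 0) : ∃ i : ZMod n, i + i = e := by
  have he : ((e.val : ℕ) : ZMod n) = e := by simp [ZMod.natCast_val, ZMod.cast_id]
  have h1 : ((e.val : ℕ) : ZMod 2) = 0 := by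
    rw [← map_natCast (pr n hd), he, h]
  have h2 : 2 ∣ e.val := by
    rwa [ZMod.natCast_eq_zero_iff] at h1
  obtain ⟨m, hm⟩ := h2
  refine ⟨(m : ZMod n), ?_⟩
  rw [← he, hm]
  push_cast
  ring

lemma pr_add_sub (hd : 2 ∣ n) (i j : ZMod n) : pr n hd (i + j) = pr n hd (i - j) := by
  rw [map_add, map_sub]
  have : ∀ a b : ZMod 2, a + b = a - b := by decide
  exact this _ _

lemma two_cases : ∀ x : ZMod 2, x = 0 ∨ x = 1 := by decide

end DPaux

namespace DPaux
variable (n : ℕ) [NeZero n]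

def u1 : Bool × ZMod n → ℝ := fun x => if x = (false, (0 : ZMod n)) then 1 else 0
def u2 (hd : 2 ∣ n) : Bool × ZMod n → ℝ :=
  fun x => if pr n hd x.2 = 0 then (if x.1 then 1 else -1) else 0
def u3 : Bool × ZMod n → ℝ := fun x => if x.1 then 1 else -1
def uu (hd : 2 ∣ n) : Fin 3 → (Bool × ZMod n → ℝ) := ![u1 n, u2 n hd, u3 n]

lemma sum_u1 : ∑ x, u1 n x = 1 := by
  simp [u1, Finset.sum_ite_eq']

lemma sum_u2 (hd : 2 ∣ n) : ∑ x, u2 n hd x = 0 := by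
  rw [Fintype.sum_prod_type_right]
  have h : ∀ k : ZMod n, u2 n hd (true, k) + u2 n hd (false, k) = 0 := by
    intro k
    by_cases h : pr n hd k = 0 <;> simp [u2, h]
  refine Finset.sum_eq_zero fun k _ => ?_
  rw [Fintype.sum_bool]
  exact h k

lemma sum_u3 : ∑ x, u3 n x = 0 := by
  rw [Fintype.sum_prod_type_right]
  refine Finset.sum_eq_zero fun k _ => ?_
  rw [Fintype.sum_bool]
  simp [u3]

lemma u1_mem_ker : u1 n ∈ LinearMap.ker (ψ n) := by
  rw [LinearMap.mem_ker]
  ext a b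
  rw [psi_apply, sum_u1, Matrix.zero_apply]
  by_cases h : a = b
  · have : a - b = 0 := by rw [h]; ring
    simp [u1, h, this]
  · have : a - b ≠ 0 := sub_ne_zero.mpr h
    simp [u1, h, this]

lemma u2_mem_ker (hd : 2 ∣ n) : u2 n hd ∈ LinearMap.ker (ψ n) := by
  rw [LinearMap.mem_ker]
  ext a b
  rw [psi_apply, sum_u2, Matrix.zero_apply]
  have hp := pr_add_sub n hd a b
  simp only [u2]
  rw [hp]
  by_cases h : pr n hd (a - b) = 0 <;> simp [h, -map_sub, -map_add]

lemma u3_mem_ker : u3 n ∈ LinearMap.ker (ψ n) := by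
  rw [LinearMap.mem_ker]
  ext a b
  rw [psi_apply, sum_u3, Matrix.zero_apply]
  simp [u3]

lemma uu_mem_ker (hd : 2 ∣ n) (i : Fin 3) : uu n hd i ∈ LinearMap.ker (ψ n) := by
  fin_cases i
  · exact u1_mem_ker n
  · exact u2_mem_ker n hd
  · exact u3_mem_ker n

lemma ker_le (hn : 4 ≤ n) (hd : 2 ∣ n) :
    LinearMap.ker (ψ n) ≤ Submodule.span ℝ (Set.range (uu n hd)) := by
  intro c hc
  rw [LinearMap.mem_ker] at hc
  haveI : Fact (1 < n) := ⟨by omega⟩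
  set S := ∑ x, c x with hS
  have E : ∀ i j : ZMod n, c (false, i - j) + c (true, i + j) = S * (if i = j then 1 else 0) := by
    intro i j
    have := psi_apply n c i j
    rw [hc, Matrix.zero_apply] at this
    linarith [this]
  have L1 : ∀ a b : ZMod n, a ≠ 0 → pr n hd a = pr n hd b → c (false, a) + c (true, b) = 0 := by
    intro a b ha hab
    have hsum0 : pr n hd (a + b) = 0 := by
      rw [map_add, hab]
      have : ∀ x : ZMod 2, x + x = 0 := by decide
      exact this _
    obtain ⟨i, hi⟩ := exists_half n hd (a + b) hsum0
    set j := i - a with hj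
    have h1 : i - j = a := by rw [hj]; ring
    have h2 : i + j = b := by
      rw [hj]
      have : i + (i - a) = (i + i) - a := by ring
      rw [this, hi]; ring
    have h3 : i ≠ j := fun h => ha (by rw [← h1, h]; ring)
    have := E i j
    rw [h1, h2, if_neg h3, mul_zero] at this
    exact this
  have L2 : ∀ b : ZMod n, pr n hd b = 0 → c (false, 0) + c (true, b) = S := by
    intro b hb
    obtain ⟨i, hi⟩ := exists_half n hd b hb
    have := E i i
    rw [sub_self, hi, if_pos rfl, mul_one] at this
    exact this
  have h1ne : (1 : ZMod n) ≠ 0 := one_ne_zero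
  have pr0 : pr n hd 0 = 0 := map_zero _
  have pr1 : pr n hd 1 = 1 := map_one _
  have geq : ∀ b b' : ZMod n, pr n hd b = pr n hd b' → c (true, b) = c (true, b') := by
    intro b b' h
    rcases two_cases (pr n hd b) with h0 | h0
    · have := L2 b h0
      have := L2 b' (h ▸ h0)
      linarith
    · have hb : pr n hd 1 = pr n hd b := by rw [pr1, h0]
      have hb' : pr n hd 1 = pr n hd b' := by rw [pr1, ← h, h0]
      have := L1 1 b h1ne hb
      have := L1 1 b' h1ne hb'
      linarith
  have key : c = (c (false, 0) + c (true, 0)) • u1 n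
      + (c (true, 0) - c (true, 1)) • u2 n hd + c (true, 1) • u3 n := by
    funext x
    rcases x with ⟨t, k⟩
    simp only [Pi.add_apply, Pi.smul_apply, smul_eq_mul]
    cases t
    · by_cases hk : k = 0
      · subst hk
        simp [u1, u2, u3, pr0]
      · rcases two_cases (pr n hd k) with h0 | h0
        · have := L1 k 0 hk (by rw [h0, pr0])
          have hkf : ((false, k) : Bool × ZMod n) ≠ (false, 0) := by simp [hk]
          simp [u1, u2, u3, h0, hkf]
          linarith
        · have := L1 k 1 hk (by rw [h0, pr1])
          have hne : pr n hd k ≠ 0 := by rw [h0]; decide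
          have hkf : ((false, k) : Bool × ZMod n) ≠ (false, 0) := by simp [hk]
          simp [u1, u2, u3, hne, hkf]
          linarith
    · rcases two_cases (pr n hd k) with h0 | h0
      · have := geq k 0 (by rw [h0, pr0])
        simp [u1, u2, u3, h0]
        linarith
      · have := geq k 1 (by rw [h0, pr1])
        have hne : pr n hd k ≠ 0 := by rw [h0]; decide
        simp [u1, u2, u3, hne]
        linarith
  rw [key]
  have m1 : u1 n ∈ Set.range (uu n hd) := ⟨0, rfl⟩
  have m2 : u2 n hd ∈ Set.range (uu n hd) := ⟨1, rfl⟩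
  have m3 : u3 n ∈ Set.range (uu n hd) := ⟨2, rfl⟩
  exact Submodule.add_mem _ (Submodule.add_mem _
    (Submodule.smul_mem _ _ (Submodule.subset_span m1))
    (Submodule.smul_mem _ _ (Submodule.subset_span m2)))
    (Submodule.smul_mem _ _ (Submodule.subset_span m3))

end DPaux

namespace DPaux
variable (n : ℕ) [NeZero n]

lemma uu0 (hd : 2 ∣ n) : uu n hd 0 = u1 n := rfl
lemma uu1 (hd : 2 ∣ n) : uu n hd 1 = u2 n hd := rfl
lemma uu2 (hd : 2 ∣ n) : uu n hd 2 = u3 n := rfl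

lemma uu_li (hd : 2 ∣ n) : LinearIndependent ℝ (uu n hd) := by
  rw [Fintype.linearIndependent_iff]
  intro g hg
  rw [Fin.sum_univ_three, uu0, uu1, uu2] at hg
  have pr0 : pr n hd 0 = 0 := map_zero _
  have pr1ne : pr n hd 1 ≠ 0 := by rw [_root_.map_one]; decide
  have h1 := congr_fun hg (true, 1)
  have h2 := congr_fun hg (true, 0)
  have h3 := congr_fun hg (false, 0)
  simp only [Pi.add_apply, Pi.smul_apply, smul_eq_mul, Pi.zero_apply, u1, u2, u3,
    if_pos, if_neg, pr0, pr1ne] at h1 h2 h3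
  simp at h1 h2 h3
  intro i
  fin_cases i <;> simp <;> linarith

lemma finrank_ker (hn : 4 ≤ n) (hd : 2 ∣ n) :
    Module.finrank ℝ (LinearMap.ker (ψ n)) = 3 := by
  have hker : LinearMap.ker (ψ n) = Submodule.span ℝ (Set.range (uu n hd)) := by
    refine le_antisymm (ker_le n hn hd) ?_
    rw [Submodule.span_le]
    rintro _ ⟨i, rfl⟩
    exact uu_mem_ker n hd i
  rw [hker, finrank_span_eq_card (uu_li n hd), Fintype.card_fin]

lemma finrank_range (hn : 4 ≤ n) (hd : 2 ∣ n) :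
    Module.finrank ℝ (LinearMap.range (ψ n)) = 2 * n - 3 := by
  have h := LinearMap.finrank_range_add_finrank_ker (ψ n)
  rw [finrank_ker n hn hd] at h
  have hdom : Module.finrank ℝ (Bool × ZMod n → ℝ) = 2 * n := by
    rw [Module.finrank_fintype_fun_eq_card, Fintype.card_prod, Fintype.card_bool, ZMod.card]
  rw [hdom] at h
  omega

lemma span_D (n : ℕ) [NeZero n] :
    Submodule.span ℝ (Set.range (D n)) = LinearMap.range (ψ n) :=
  (Fintype.range_linearCombination ℝ (D n)).symm

end DPaux

/-- for even `n`, `dim DP_n = 2n - 3`. -/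
theorem DP_dim_even (n : ℕ) [NeZero n] (hn : 4 ≤ n) (he : Even n) :
    Module.finrank ℝ (vectorSpan ℝ (DP n)) = 2 * n - 3 := by
  have hd : 2 ∣ n := he.two_dvd
  have h1 : vectorSpan ℝ (DP n) = vectorSpan ℝ (Set.range (DPaux.P n)) := by
    rw [DP, ← direction_affineSpan, affineSpan_convexHull, direction_affineSpan,
      DPaux.vertex_set]
  have hmem : DPaux.P n (false, 0) ∈ Set.range (DPaux.P n) := ⟨(false, 0), rfl⟩
  have h2 : vectorSpan ℝ (Set.range (DPaux.P n))
      = Submodule.span ℝ (Set.range (DPaux.D n)) := by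
    have hco : ((· -ᵥ DPaux.P n (false, 0)) ∘ DPaux.P n) = DPaux.D n := by
      funext x; exact vsub_eq_sub _ _
    rw [vectorSpan_eq_span_vsub_set_right ℝ hmem, ← Set.range_comp, hco]
  rw [h1, h2, DPaux.span_D]
  exact DPaux.finrank_range n hn hd
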